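/- Let (x_j)_{j=1}^{n+1} be a family of unit vectors in ℝ^n which is full spark, and let α = max_{i≠j} |⟨x_i,x_j⟩|. Then the critical saturation level λ_c, i.e., the infimum of all λ>0 such that (x_j)_{j=1}^{n+1} does λ-saturation recovery on the closed unit ball of ℝ^n, equals 2^{−1/2}(1+α)^{1/2}. -/

import Mathlib

local notation "⟪" x ", " y "⟫" => @inner ℝ _ _ x y

/-- The saturation function `φ_λ`: `φ_λ(t) = t` if `|t| ≤ λ` and `φ_λ(t) = sign(t)·λ` else. -/
noncomputable def satur (l t : ℝ) : ℝ := max (-l) (min l t)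

lemma satur_of_le_left' {l t : ℝ} (hl : 0 ≤ l) (h : l ≤ t) : satur l t = l := by
  simp [satur, min_eq_left h, max_eq_right (by linarith : -l ≤ l)]

lemma satur_of_le_right' {l t : ℝ} (hl : 0 ≤ l) (h : t ≤ -l) : satur l t = -l := by
  simp [satur, min_eq_right (by linarith : t ≤ l), max_eq_left h]

lemma satur_sign {l e t : ℝ} (hl : 0 ≤ l) (he : e = 1 ∨ e = -1) (h : l ≤ e * t) :
    satur l t = e * l := by
  rcases he with rfl | rfl
  · rw [one_mul] at h ⊢; exact satur_of_le_left' hl h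
  · rw [neg_one_mul] at h ⊢
    exact satur_of_le_right' hl (by linarith)

lemma satur_cases {l a b : ℝ} (hl : 0 < l) (h : satur l a = satur l b) (hab : a ≠ b) :
    ∃ e : ℝ, (e = 1 ∨ e = -1) ∧ l ≤ e * a ∧ l ≤ e * b := by
  unfold satur at h
  rw [max_def, max_def, min_def, min_def] at h
  split_ifs at h <;>
  first
  | exact ⟨1, Or.inl rfl, by linarith, by linarith⟩
  | exact ⟨-1, Or.inr rfl, by linarith, by linarith⟩
  | exact absurd (by linarith : a = b) hab

lemma eq_zero_of_orth {n : ℕ} (S : Set (EuclideanSpace ℝ (Fin n)))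
    (hsp : Submodule.span ℝ S = ⊤) (d : EuclideanSpace ℝ (Fin n))
    (h : ∀ v ∈ S, ⟪v, d⟫ = 0) : d = 0 := by
  have hd : d ∈ (Submodule.span ℝ S)ᗮ := by
    rw [Submodule.mem_orthogonal]
    intro u hu
    induction hu using Submodule.span_induction with
    | mem x hx => exact h x hx
    | zero => simp
    | add x y hx hy ihx ihy => rw [inner_add_left, ihx, ihy]; ring
    | smul a x hx ih => rw [real_inner_smul_left, ih]; ring
  rw [hsp, Submodule.top_orthogonal_eq_bot] at hd
  exact (Submodule.mem_bot ℝ).mp hd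

set_option maxHeartbeats 2000000 in
theorem critical_level_of_full_spark_n_plus_one_unit_vectors
    {n : ℕ} (xv : Fin (n + 1) → EuclideanSpace ℝ (Fin n))
    (hunit : ∀ j, ‖xv j‖ = 1)
    (hfs : ∀ s : Finset (Fin (n + 1)), s.card = n →
      LinearIndependent ℝ (fun j : {j // j ∈ s} => xv j.1))
    (α : ℝ)
    (hα : IsGreatest {t : ℝ | ∃ i j : Fin (n + 1), i ≠ j ∧ t = |⟪xv i, xv j⟫|} α)
    (lamc : ℝ)
    (hlamc : lamc = sInf {l : ℝ | 0 < l ∧ Set.InjOn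
      (fun x : EuclideanSpace ℝ (Fin n) => fun j : Fin (n + 1) => satur l ⟪x, xv j⟫)
      (Metric.closedBall 0 1)}) :
    lamc = Real.sqrt ((1 + α) / 2) := by
  classical
  obtain ⟨⟨i0, j0, hij0, hval⟩, hub⟩ := hα
  set μ := Real.sqrt ((1 + α) / 2) with hμdef
  have hα0 : 0 ≤ α := hval ▸ abs_nonneg _
  have hμpos : 0 < μ := Real.sqrt_pos.mpr (by linarith)
  have hμ2 : μ ^ 2 = (1 + α) / 2 := Real.sq_sqrt (by linarith)
  -- upper bound on |⟪xv i, xv j⟫| for i ≠ j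
  have hubij : ∀ i j : Fin (n + 1), i ≠ j → |⟪xv i, xv j⟫| ≤ α := fun i j hij =>
    hub ⟨i, j, hij, rfl⟩
  -- Part 1: injectivity for μ < l
  have hL1 : ∀ l : ℝ, μ < l → Set.InjOn
      (fun x : EuclideanSpace ℝ (Fin n) => fun j : Fin (n + 1) => satur l ⟪x, xv j⟫)
      (Metric.closedBall 0 1) := by
    intro l hl x hx y hy heq
    by_contra hne
    have hl0 : 0 < l := lt_of_le_of_lt (Real.sqrt_nonneg _) hl
    set d := x - y with hd
    have hd0 : d ≠ 0 := sub_ne_zero.mpr hne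
    set Z : Finset (Fin (n + 1)) := Finset.univ.filter (fun k => ⟪d, xv k⟫ ≠ 0) with hZdef
    have hZ : 1 < Z.card := by
      by_contra hZc
      push_neg at hZc
      have h2 : n ≤ Zᶜ.card := by
        have := Finset.card_compl Z
        simp only [Fintype.card_fin] at this
        omega
      obtain ⟨s, hs_sub, hs_card⟩ := Finset.exists_subset_card_eq h2
      have hli := hfs s hs_card
      have hcardeq : Fintype.card {j // j ∈ s} = Module.finrank ℝ (EuclideanSpace ℝ (Fin n)) := by
        simp [hs_card, finrank_euclideanSpace_fin]
      have hsp := hli.span_eq_top_of_card_eq_finrank' hcardeq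
      refine hd0 (eq_zero_of_orth _ hsp d ?_)
      rintro v ⟨⟨k, hk⟩, rfl⟩
      have hk' := hs_sub hk
      rw [Finset.mem_compl, hZdef, Finset.mem_filter] at hk'
      push_neg at hk'
      rw [real_inner_comm]
      exact hk' (Finset.mem_univ k)
    obtain ⟨i, hi, j, hj, hij⟩ := Finset.one_lt_card.mp hZ
    have hdi : ⟪d, xv i⟫ ≠ 0 := (Finset.mem_filter.mp hi).2
    have hdj : ⟪d, xv j⟫ ≠ 0 := (Finset.mem_filter.mp hj).2
    have hxi : ⟪x, xv i⟫ ≠ ⟪y, xv i⟫ := fun hcon => hdi (by rw [hd, inner_sub_left, hcon, sub_self])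
    have hxj : ⟪x, xv j⟫ ≠ ⟪y, xv j⟫ := fun hcon => hdj (by rw [hd, inner_sub_left, hcon, sub_self])
    obtain ⟨ei, hei, hexi, heyi⟩ := satur_cases hl0 (congrFun heq i) hxi
    obtain ⟨ej, hej, hexj, heyj⟩ := satur_cases hl0 (congrFun heq j) hxj
    set v := ei • xv i + ej • xv j with hv
    have hip : 4 * l ≤ ⟪x + y, v⟫ := by
      rw [hv, inner_add_left, inner_add_right, inner_add_right, real_inner_smul_right,
        real_inner_smul_right, real_inner_smul_right, real_inner_smul_right]
      linarith
    have hei1 : |ei| = 1 := by rcases hei with rfl | rfl <;> norm_num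
    have hej1 : |ej| = 1 := by rcases hej with rfl | rfl <;> norm_num
    have hnv : ‖v‖ ^ 2 ≤ 2 + 2 * α := by
      have h1 : ‖v‖ ^ 2 = ‖ei • xv i‖ ^ 2 + 2 * ⟪ei • xv i, ej • xv j⟫ + ‖ej • xv j‖ ^ 2 :=
        norm_add_sq_real _ _
      have h2 : ‖ei • xv i‖ = 1 := by
        rw [norm_smul, Real.norm_eq_abs, hei1, hunit, one_mul]
      have h3 : ‖ej • xv j‖ = 1 := by
        rw [norm_smul, Real.norm_eq_abs, hej1, hunit, one_mul]
      have h4 : ⟪ei • xv i, ej • xv j⟫ = ei * (ej * ⟪xv i, xv j⟫) := by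
        rw [real_inner_smul_left, real_inner_smul_right]
      have h5 : |ei * (ej * ⟪xv i, xv j⟫)| ≤ α := by
        rw [abs_mul, abs_mul, hei1, hej1, one_mul, one_mul]
        exact hubij i j hij
      rw [h1, h2, h3, h4]
      have := abs_le.mp h5
      nlinarith [this.2]
    have hCS := real_inner_le_norm (x + y) v
    have hx1 : ‖x‖ ≤ 1 := mem_closedBall_zero_iff.mp hx
    have hy1 : ‖y‖ ≤ 1 := mem_closedBall_zero_iff.mp hy
    have hxy2 : ‖x + y‖ ≤ 2 := le_trans (norm_add_le x y) (by linarith)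
    have h1 : 2 * l ≤ ‖v‖ := by nlinarith [norm_nonneg v, norm_nonneg (x + y)]
    have h2 : ‖v‖ ≤ 2 * μ := by nlinarith [norm_nonneg v]
    linarith
  -- Part 2: non-injectivity for 0 < l < μ
  have hL2 : ∀ l : ℝ, 0 < l → l < μ → ¬ Set.InjOn
      (fun x : EuclideanSpace ℝ (Fin n) => fun j : Fin (n + 1) => satur l ⟪x, xv j⟫)
      (Metric.closedBall 0 1) := by
    intro l hl0 hlμ hinj
    have hn : 0 < n := by
      rcases Nat.eq_zero_or_pos n with h | h
      · subst h
        have h1 := i0.isLt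
        have h2 := j0.isLt
        exact absurd (Fin.ext (by omega)) hij0
      · exact h
    set s : Finset (Fin (n + 1)) := (Finset.univ.erase i0).erase j0 with hsdef
    have hscard : s.card = n - 1 := by
      rw [hsdef, Finset.card_erase_of_mem (Finset.mem_erase.mpr ⟨hij0.symm, Finset.mem_univ _⟩),
        Finset.card_erase_of_mem (Finset.mem_univ _), Finset.card_univ, Fintype.card_fin]
      omega
    set K := Submodule.span ℝ (↑(s.image xv) : Set (EuclideanSpace ℝ (Fin n))) with hKdef
    have hK : K ≠ ⊤ := by
      intro h
      have h1 : Module.finrank ℝ K ≤ (s.image xv).card := finrank_span_finset_le_card _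
      have h2 : (s.image xv).card ≤ s.card := Finset.card_image_le
      rw [h, finrank_top, finrank_euclideanSpace_fin] at h1
      omega
    have hKorth : Kᗮ ≠ ⊥ := fun h => hK (Submodule.orthogonal_eq_bot_iff.mp h)
    obtain ⟨d, hdK, hd0⟩ := (Submodule.ne_bot_iff _).mp hKorth
    have hdorth : ∀ k, k ≠ i0 → k ≠ j0 → ⟪d, xv k⟫ = 0 := by
      intro k hk1 hk2
      rw [real_inner_comm]
      refine Submodule.inner_right_of_mem_orthogonal (Submodule.subset_span ?_) hdK
      exact Finset.mem_coe.mpr (Finset.mem_image.mpr ⟨k,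
        Finset.mem_erase.mpr ⟨hk2, Finset.mem_erase.mpr ⟨hk1, Finset.mem_univ _⟩⟩, rfl⟩)
    set β := ⟪xv i0, xv j0⟫ with hβ
    have hβα : |β| = α := hval.symm
    obtain ⟨ε, hε1, hεβ⟩ : ∃ e : ℝ, (e = 1 ∨ e = -1) ∧ e * β = α := by
      by_cases h : 0 ≤ β
      · refine ⟨1, Or.inl rfl, ?_⟩
        rw [one_mul]; rw [abs_of_nonneg h] at hβα; exact hβα
      · push_neg at h
        refine ⟨-1, Or.inr rfl, ?_⟩
        rw [neg_one_mul]; rw [abs_of_neg h] at hβα; exact hβα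
    have hεabs : |ε| = 1 := by rcases hε1 with rfl | rfl <;> norm_num
    set w := xv i0 + ε • xv j0 with hw
    have hii : ⟪xv i0, xv i0⟫ = 1 := by
      rw [real_inner_self_eq_norm_sq, hunit]; norm_num
    have hjj : ⟪xv j0, xv j0⟫ = 1 := by
      rw [real_inner_self_eq_norm_sq, hunit]; norm_num
    have hwi : ⟪w, xv i0⟫ = 1 + α := by
      rw [hw, inner_add_left, real_inner_smul_left, hii, real_inner_comm, ← hβ, hεβ]
    have hεwj : ε * ⟪w, xv j0⟫ = 1 + α := by
      have : ⟪w, xv j0⟫ = β + ε := by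
        rw [hw, inner_add_left, real_inner_smul_left, hjj, mul_one, hβ]
      rw [this]
      have hε2 : ε * ε = 1 := by rcases hε1 with rfl | rfl <;> norm_num
      nlinarith [hεβ]
    have hw2 : ‖w‖ ^ 2 = 2 + 2 * α := by
      have h1 : ‖w‖ ^ 2 = ‖xv i0‖ ^ 2 + 2 * ⟪xv i0, ε • xv j0⟫ + ‖ε • xv j0‖ ^ 2 :=
        norm_add_sq_real _ _
      have h2 : ⟪xv i0, ε • xv j0⟫ = α := by rw [real_inner_smul_right, ← hβ]; linarith [hεβ]
      have h3 : ‖ε • xv j0‖ = 1 := by rw [norm_smul, Real.norm_eq_abs, hεabs, hunit, one_mul]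
      rw [h1, h2, h3, hunit]; ring
    have hwnorm : ‖w‖ = 2 * μ := by
      have h1 : ‖w‖ = Real.sqrt (‖w‖ ^ 2) := (Real.sqrt_sq (norm_nonneg w)).symm
      rw [h1, hw2, show (2 : ℝ) + 2 * α = 2 ^ 2 * ((1 + α) / 2) by ring, Real.sqrt_mul (by norm_num),
        Real.sqrt_sq (by norm_num : (0:ℝ) ≤ 2)]
    set c := ((l + μ) / (2 + 2 * α)) • w with hc
    have h2α : (0:ℝ) < 2 + 2 * α := by linarith
    have hci : ⟪c, xv i0⟫ = (l + μ) / 2 := by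
      rw [hc, real_inner_smul_left, hwi]
      field_simp
    have hcj : ε * ⟪c, xv j0⟫ = (l + μ) / 2 := by
      rw [hc, real_inner_smul_left]
      rw [show ε * ((l + μ) / (2 + 2 * α) * ⟪w, xv j0⟫) =
        (l + μ) / (2 + 2 * α) * (ε * ⟪w, xv j0⟫) by ring, hεwj]
      field_simp
    have hcnorm : ‖c‖ = (l + μ) / (2 * μ) := by
      rw [hc, norm_smul, Real.norm_eq_abs, abs_of_pos (by positivity), hwnorm]
      rw [show (2:ℝ) + 2 * α = (2 * μ) ^ 2 by nlinarith]
      field_simp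
    have hcball : ‖c‖ < 1 := by
      rw [hcnorm, div_lt_one (by positivity)]; linarith
    set δ := (μ - l) / 2 with hδdef
    have hδ0 : 0 < δ := by rw [hδdef]; linarith
    have hdn : 0 < ‖d‖ := norm_pos_iff.mpr hd0
    set Dij := |⟪d, xv i0⟫| + |⟪d, xv j0⟫| + 1 with hDij
    have hDij0 : 0 < Dij := by positivity
    set t := min ((1 - ‖c‖) / ‖d‖) (δ / Dij) with ht
    have ht0 : 0 < t := lt_min (div_pos (by linarith) hdn) (div_pos hδ0 hDij0)
    have htd : t * ‖d‖ ≤ 1 - ‖c‖ := by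
      rw [← le_div_iff₀ hdn]; exact min_le_left _ _
    have htD : t * Dij ≤ δ := by
      rw [← le_div_iff₀ hDij0]; exact min_le_right _ _
    have hti : t * |⟪d, xv i0⟫| ≤ δ := by nlinarith [abs_nonneg ⟪d, xv j0⟫]
    have htj : t * |⟪d, xv j0⟫| ≤ δ := by nlinarith [abs_nonneg ⟪d, xv i0⟫]
    set q := c + t • d with hq
    have hqc : q ≠ c := by
      rw [hq]
      intro h
      have : t • d = 0 := by
        have := congrArg (fun z => z - c) h
        simpa [add_sub_cancel_left] using this
      exact (smul_ne_zero ht0.ne' hd0) this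
    have hcmem : c ∈ Metric.closedBall (0 : EuclideanSpace ℝ (Fin n)) 1 :=
      mem_closedBall_zero_iff.mpr hcball.le
    have hqmem : q ∈ Metric.closedBall (0 : EuclideanSpace ℝ (Fin n)) 1 := by
      rw [mem_closedBall_zero_iff, hq]
      calc ‖c + t • d‖ ≤ ‖c‖ + ‖t • d‖ := norm_add_le _ _
        _ = ‖c‖ + t * ‖d‖ := by rw [norm_smul t d, Real.norm_of_nonneg ht0.le]
        _ ≤ 1 := by linarith
    have hout : (fun j : Fin (n + 1) => satur l ⟪q, xv j⟫) =
        (fun j : Fin (n + 1) => satur l ⟪c, xv j⟫) := by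
      funext k
      have hqk : ∀ k, ⟪q, xv k⟫ = ⟪c, xv k⟫ + t * ⟪d, xv k⟫ := by
        intro m; rw [hq, inner_add_left, real_inner_smul_left d (xv m) t]
      rcases eq_or_ne k i0 with hk1 | hk1
      · rw [hk1]
        have hc2 : l ≤ ⟪c, xv i0⟫ := by rw [hci]; rw [hδdef] at hδ0; linarith
        have hq2 : l ≤ ⟪q, xv i0⟫ := by
          rw [hqk, hci]
          have h3 : -(t * |⟪d, xv i0⟫|) ≤ t * ⟪d, xv i0⟫ := by
            nlinarith [neg_abs_le ⟪d, xv i0⟫, ht0.le]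
          rw [hδdef] at hδ0 hti
          linarith
        rw [satur_of_le_left' hl0.le hq2, satur_of_le_left' hl0.le hc2]
      · rcases eq_or_ne k j0 with hk2 | hk2
        · rw [hk2]
          have hc2 : l ≤ ε * ⟪c, xv j0⟫ := by rw [hcj]; rw [hδdef] at hδ0; linarith
          have hq2 : l ≤ ε * ⟪q, xv j0⟫ := by
            rw [hqk]
            have h2 : |ε * (t * ⟪d, xv j0⟫)| = t * |⟪d, xv j0⟫| := by
              rw [abs_mul, hεabs, one_mul, abs_mul, abs_of_pos ht0]
            have h3 : -(t * |⟪d, xv j0⟫|) ≤ ε * (t * ⟪d, xv j0⟫) := by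
              have h4 := neg_abs_le (ε * (t * ⟪d, xv j0⟫))
              linarith [h2.symm.le, h2.le]
            have h5 : ε * (⟪c, xv j0⟫ + t * ⟪d, xv j0⟫) =
                ε * ⟪c, xv j0⟫ + ε * (t * ⟪d, xv j0⟫) := by ring
            rw [h5, hcj]
            rw [hδdef] at hδ0 htj
            linarith
          rw [satur_sign hl0.le hε1 hq2, satur_sign hl0.le hε1 hc2]
        · rw [hqk, hdorth k hk1 hk2, mul_zero, add_zero]
    exact hqc (hinj hqmem hcmem hout)
  -- Conclude
  rw [hlamc]
  have hTsup : ∀ l : ℝ, μ < l → l ∈ {l : ℝ | 0 < l ∧ Set.InjOn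
      (fun x : EuclideanSpace ℝ (Fin n) => fun j : Fin (n + 1) => satur l ⟪x, xv j⟫)
      (Metric.closedBall 0 1)} := fun l hl => ⟨lt_of_le_of_lt (Real.sqrt_nonneg _) hl, hL1 l hl⟩
  have hTsub : ∀ l ∈ {l : ℝ | 0 < l ∧ Set.InjOn
      (fun x : EuclideanSpace ℝ (Fin n) => fun j : Fin (n + 1) => satur l ⟪x, xv j⟫)
      (Metric.closedBall 0 1)}, μ ≤ l := by
    rintro l ⟨hl0, hinj⟩
    by_contra h
    push_neg at h
    exact hL2 l hl0 h hinj
  have hne : Set.Nonempty {l : ℝ | 0 < l ∧ Set.InjOn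
      (fun x : EuclideanSpace ℝ (Fin n) => fun j : Fin (n + 1) => satur l ⟪x, xv j⟫)
      (Metric.closedBall 0 1)} := ⟨μ + 1, hTsup _ (by linarith)⟩
  have hbdd : BddBelow {l : ℝ | 0 < l ∧ Set.InjOn
      (fun x : EuclideanSpace ℝ (Fin n) => fun j : Fin (n + 1) => satur l ⟪x, xv j⟫)
      (Metric.closedBall 0 1)} := ⟨μ, hTsub⟩
  refine le_antisymm ?_ (le_csInf hne hTsub)
  refine le_of_forall_pos_le_add fun ε hε => ?_
  exact csInf_le hbdd (hTsup (μ + ε) (by linarith))
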